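/- Let ν > 0, T > 0, t ∈ (0,T], N ∈ ℕ. Then (1/√t) · ∑_{k=1}^{N} (1 - exp(-ν π² k² t))² / (ν π² k²) ≥ ∫₀^{max{0, t(N+1)² − (1+√t)²}} (1 - exp(-ν π² min{1, t N²}))² / (2 ν π² (x + (1+√T)²)^{3/2}) dx. -/

import Mathlib

open Real

lemma telescope (k₀ N : ℕ) (h : k₀ ≤ N) :
    ∑ k ∈ Finset.Icc k₀ N, ((1:ℝ)/k - 1/(k+1)) = 1/k₀ - 1/(N+1) := by
  induction N with
  | zero => interval_cases k₀ <;> simp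
  | succ n ih =>
    rcases Nat.lt_or_ge k₀ (n+1) with h' | h'
    · rw [Finset.sum_Icc_succ_top (by omega)]
      rw [ih (by omega)]
      push_cast
      ring
    · have hk : k₀ = n+1 := by omega
      subst hk
      simp

lemma integrable_aux (ν c a2 M : ℝ) (hν : 0 < ν) (ha2 : 0 < a2) (hM : 0 ≤ M) :
    IntervalIntegrable
      (fun x => c / (2 * ν * π ^ 2 * (x + a2) ^ ((3:ℝ)/2))) MeasureTheory.volume 0 M := by
  apply ContinuousOn.intervalIntegrable
  apply ContinuousOn.div continuousOn_const
  · apply ContinuousOn.mul continuousOn_const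
    apply ContinuousOn.rpow_const (by fun_prop)
    intro x hx
    rw [Set.uIcc_of_le hM] at hx
    left
    have : 0 < x + a2 := by linarith [hx.1]
    exact this.ne'
  · intro x hx
    rw [Set.uIcc_of_le hM] at hx
    have : 0 < x + a2 := by linarith [hx.1]
    have := Real.rpow_pos_of_pos this ((3:ℝ)/2)
    positivity

lemma integral_eval (ν c a2 M : ℝ) (hν : 0 < ν) (ha2 : 0 < a2) (hM : 0 ≤ M) :
    ∫ x in (0:ℝ)..M, c / (2 * ν * π ^ 2 * (x + a2) ^ ((3:ℝ)/2))
      = c / (ν * π ^ 2) * (a2 ^ (-(1:ℝ)/2) - (M + a2) ^ (-(1:ℝ)/2)) := by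
  have hd : 0 < ν * π ^ 2 := by positivity
  have key : ∀ x ∈ Set.uIcc (0:ℝ) M,
      HasDerivAt (fun y => -(c / (ν * π ^ 2)) * (y + a2) ^ (-(1:ℝ)/2))
        (c / (2 * ν * π ^ 2 * (x + a2) ^ ((3:ℝ)/2))) x := by
    intro x hx
    rw [Set.uIcc_of_le hM] at hx
    have hx0 : 0 ≤ x := hx.1
    have hxa : 0 < x + a2 := by linarith
    have h1 : HasDerivAt (fun y : ℝ => y + a2) 1 x := (hasDerivAt_id x).add_const a2
    have h2 := h1.rpow_const (p := -(1:ℝ)/2) (Or.inl hxa.ne')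
    have h3 := h2.const_mul (-(c / (ν * π ^ 2)))
    convert h3 using 1
    · rfl
    · rfl
    have hre : (x + a2) ^ (-(1:ℝ)/2 - 1) = ((x + a2) ^ ((3:ℝ)/2))⁻¹ := by
      rw [← Real.rpow_neg hxa.le]
      norm_num
    rw [hre]
    have hpos : (0:ℝ) < (x + a2) ^ ((3:ℝ)/2) := Real.rpow_pos_of_pos hxa _
    rw [div_eq_iff (by positivity)]
    field_simp
  rw [intervalIntegral.integral_eq_sub_of_hasDerivAt key (integrable_aux ν c a2 M hν ha2 hM)]
  simp only [zero_add]
  ring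

lemma rpow_neg_half (y : ℝ) (hy : 0 < y) : y ^ (-(1:ℝ)/2) = (Real.sqrt y)⁻¹ := by
  rw [neg_div, Real.rpow_neg hy.le, Real.sqrt_eq_rpow]

set_option maxHeartbeats 1000000 in
open Real in
theorem stmt_6 (ν T t : ℝ) (hν : 0 < ν) (hT : 0 < T) (ht : t ∈ Set.Ioc 0 T) (N : ℕ) :
    (1 / Real.sqrt t) *
        ∑ k ∈ Finset.Icc 1 N,
          (1 - Real.exp (-(ν * π ^ 2 * k ^ 2 * t))) ^ 2 / (ν * π ^ 2 * k ^ 2) ≥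
      ∫ x in (0:ℝ)..(max 0 (t * (N + 1) ^ 2 - (1 + Real.sqrt t) ^ 2)),
        (1 - Real.exp (-(ν * π ^ 2 * min 1 (t * N ^ 2)))) ^ 2 /
          (2 * ν * π ^ 2 * (x + (1 + Real.sqrt T) ^ 2) ^ ((3:ℝ) / 2)) := by
  obtain ⟨ht0, htT⟩ := ht
  have hπ : 0 < π := Real.pi_pos
  have hd : 0 < ν * π ^ 2 := by positivity
  have hs : 0 < Real.sqrt t := Real.sqrt_pos.mpr ht0
  set s := Real.sqrt t with hs_def
  have hst : s ^ 2 = t := Real.sq_sqrt ht0.le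
  have hLHSnn : 0 ≤ (1 / s) *
      ∑ k ∈ Finset.Icc 1 N,
        (1 - Real.exp (-(ν * π ^ 2 * k ^ 2 * t))) ^ 2 / (ν * π ^ 2 * k ^ 2) := by
    apply mul_nonneg (by positivity)
    apply Finset.sum_nonneg
    intro k hk
    have hk1 : (1:ℕ) ≤ k := (Finset.mem_Icc.mp hk).1
    have hk1' : (1:ℝ) ≤ (k:ℝ) := by exact_mod_cast hk1
    positivity
  by_cases hM0 : t * ((N:ℝ) + 1) ^ 2 - (1 + s) ^ 2 ≤ 0
  · rw [max_eq_left hM0, intervalIntegral.integral_same]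
    exact hLHSnn
  push_neg at hM0
  set M : ℝ := t * ((N:ℝ) + 1) ^ 2 - (1 + s) ^ 2 with hM_def
  rw [max_eq_right hM0.le]
  -- basic consequences
  have hsN : 1 + s < s * ((N:ℝ) + 1) := by
    have h1 : (1 + s) ^ 2 < (s * ((N:ℝ)+1)) ^ 2 := by nlinarith
    exact lt_of_pow_lt_pow_left₀ 2 (by positivity) h1
  have hsN1 : 1 < s * N := by
    have : (s:ℝ) * ((N:ℝ)+1) = s * N + s := by ring
    linarith [this ▸ hsN]
  have hNpos : 0 < (N:ℝ) := by nlinarith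
  have htN2 : 1 ≤ t * (N:ℝ)^2 := by nlinarith
  have hmin : min (1:ℝ) (t * (N:ℝ)^2) = 1 := min_eq_left htN2
  simp only [hmin, mul_one]
  set c : ℝ := (1 - Real.exp (-(ν * π ^ 2))) ^ 2 with hc_def
  have hcnn : 0 ≤ c := sq_nonneg _
  have hsT : s ≤ Real.sqrt T := Real.sqrt_le_sqrt htT
  have hsT0 : 0 < Real.sqrt T := Real.sqrt_pos.mpr hT
  -- compare integrand with the one using a2 = (1+s)^2
  have ha2t : (0:ℝ) < (1 + s) ^ 2 := by positivity
  have ha2T : (0:ℝ) < (1 + Real.sqrt T) ^ 2 := by positivity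
  have hmono : (∫ x in (0:ℝ)..M,
        c / (2 * ν * π ^ 2 * (x + (1 + Real.sqrt T) ^ 2) ^ ((3:ℝ)/2)))
      ≤ ∫ x in (0:ℝ)..M, c / (2 * ν * π ^ 2 * (x + (1 + s) ^ 2) ^ ((3:ℝ)/2)) := by
    apply intervalIntegral.integral_mono_on hM0.le
      (integrable_aux ν c _ M hν ha2T hM0.le)
      (integrable_aux ν c _ M hν ha2t hM0.le)
    intro x hx
    have hx0 : 0 ≤ x := hx.1
    have h1 : (1 + s) ^ 2 ≤ (1 + Real.sqrt T) ^ 2 := by nlinarith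
    have hb1 : (0:ℝ) < (x + (1+s)^2) ^ ((3:ℝ)/2) :=
      Real.rpow_pos_of_pos (by positivity) _
    have hb2 : (x + (1+s)^2) ^ ((3:ℝ)/2) ≤ (x + (1 + Real.sqrt T)^2) ^ ((3:ℝ)/2) :=
      Real.rpow_le_rpow (by positivity) (by linarith) (by norm_num)
    gcongr
  have hval : (∫ x in (0:ℝ)..M, c / (2 * ν * π ^ 2 * (x + (1 + s) ^ 2) ^ ((3:ℝ)/2)))
      = c / (ν * π ^ 2) * ((1 + s)⁻¹ - (s * ((N:ℝ)+1))⁻¹) := by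
    rw [integral_eval ν c _ M hν ha2t hM0.le]
    have e1 : ((1 + s)^2 : ℝ) ^ (-(1:ℝ)/2) = (1 + s)⁻¹ := by
      rw [rpow_neg_half _ ha2t, Real.sqrt_sq (by positivity)]
    have e2 : (M + (1 + s)^2 : ℝ) ^ (-(1:ℝ)/2) = (s * ((N:ℝ)+1))⁻¹ := by
      have hMa : M + (1 + s)^2 = (s * ((N:ℝ)+1))^2 := by
        rw [hM_def, ← hst]; ring
      rw [hMa, rpow_neg_half _ (by positivity), Real.sqrt_sq (by positivity)]
    rw [e1, e2]
  -- now the sum side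
  set k₀ : ℕ := Nat.ceil (1/s) with hk₀_def
  have hk₀pos : 0 < k₀ := Nat.ceil_pos.mpr (by positivity)
  have hk₀ge : 1/s ≤ (k₀:ℝ) := Nat.le_ceil _
  have hk₀lt : (k₀:ℝ) < 1/s + 1 := Nat.ceil_lt_add_one (by positivity)
  have hk₀N : k₀ ≤ N := by
    apply Nat.ceil_le.mpr
    rw [div_le_iff₀ hs]
    nlinarith
  have hsk₀ : s * (k₀:ℝ) ≤ 1 + s := by
    have := mul_lt_mul_of_pos_left hk₀lt hs
    rw [mul_add, mul_one_div, div_self hs.ne', mul_one] at this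
    linarith
  have hsk₀pos : 0 < s * (k₀:ℝ) := by
    have : (1:ℝ) ≤ (k₀:ℝ) := by exact_mod_cast hk₀pos
    positivity
  have hterm : ∀ k ∈ Finset.Icc k₀ N,
      (c / (ν * π ^ 2)) * ((1:ℝ)/k - 1/(k+1))
        ≤ (1 - Real.exp (-(ν * π ^ 2 * (k:ℝ) ^ 2 * t))) ^ 2 / (ν * π ^ 2 * (k:ℝ) ^ 2) := by
    intro k hk
    obtain ⟨hk₀k, hkN⟩ := Finset.mem_Icc.mp hk
    have hk1 : (1:ℝ) ≤ (k:ℝ) := by exact_mod_cast hk₀pos.trans_le hk₀k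
    have hkpos : (0:ℝ) < (k:ℝ) := by linarith
    have hkk₀ : (k₀:ℝ) ≤ (k:ℝ) := by exact_mod_cast hk₀k
    have hsk : 1 ≤ s * (k:ℝ) := by
      have : 1/s ≤ (k:ℝ) := hk₀ge.trans hkk₀
      rw [div_le_iff₀ hs] at this
      linarith [this]
    have hkt : 1 ≤ (k:ℝ)^2 * t := by nlinarith
    have hexp : Real.exp (-(ν * π ^ 2 * (k:ℝ) ^ 2 * t)) ≤ Real.exp (-(ν * π ^ 2)) := by
      apply Real.exp_le_exp.mpr
      have : ν * π ^ 2 ≤ ν * π ^ 2 * ((k:ℝ)^2 * t) := le_mul_of_one_le_right hd.le hkt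
      nlinarith [this]
    have hbase : 0 ≤ 1 - Real.exp (-(ν * π ^ 2)) := by
      have : Real.exp (-(ν * π ^ 2)) ≤ 1 := Real.exp_le_one_iff.mpr (by nlinarith)
      linarith
    have hnum : c ≤ (1 - Real.exp (-(ν * π ^ 2 * (k:ℝ) ^ 2 * t))) ^ 2 := by
      apply pow_le_pow_left₀ hbase (by linarith) 2
    have he : (1:ℝ)/k - 1/(k+1) = 1/((k:ℝ)*(k+1)) := by
      field_simp
      ring
    calc (c / (ν * π ^ 2)) * ((1:ℝ)/k - 1/(k+1))
        = c / (ν * π ^ 2) * (1/((k:ℝ)*(k+1))) := by rw [he]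
      _ ≤ c / (ν * π ^ 2) * (1/((k:ℝ)^2)) := by
          apply mul_le_mul_of_nonneg_left _ (by positivity)
          apply one_div_le_one_div_of_le (by positivity)
          nlinarith
      _ = c / (ν * π ^ 2 * (k:ℝ)^2) := by
          rw [div_mul_div_comm, mul_one]
      _ ≤ (1 - Real.exp (-(ν * π ^ 2 * (k:ℝ) ^ 2 * t))) ^ 2 / (ν * π ^ 2 * (k:ℝ)^2) := by
          exact div_le_div_of_nonneg_right hnum (by positivity)
  have hsum1 : (c / (ν * π ^ 2)) * ((1:ℝ)/k₀ - 1/((N:ℝ)+1))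
      ≤ ∑ k ∈ Finset.Icc k₀ N,
          (1 - Real.exp (-(ν * π ^ 2 * (k:ℝ) ^ 2 * t))) ^ 2 / (ν * π ^ 2 * (k:ℝ) ^ 2) := by
    have := Finset.sum_le_sum hterm
    rw [← Finset.mul_sum, telescope k₀ N hk₀N] at this
    push_cast at this ⊢
    linarith
  have hsum2 : ∑ k ∈ Finset.Icc k₀ N,
        (1 - Real.exp (-(ν * π ^ 2 * (k:ℝ) ^ 2 * t))) ^ 2 / (ν * π ^ 2 * (k:ℝ) ^ 2)
      ≤ ∑ k ∈ Finset.Icc 1 N,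
        (1 - Real.exp (-(ν * π ^ 2 * (k:ℝ) ^ 2 * t))) ^ 2 / (ν * π ^ 2 * (k:ℝ) ^ 2) := by
    apply Finset.sum_le_sum_of_subset_of_nonneg (Finset.Icc_subset_Icc hk₀pos le_rfl)
    intro i hi _
    have hi1 : (1:ℕ) ≤ i := (Finset.mem_Icc.mp hi).1
    have : (1:ℝ) ≤ (i:ℝ) := by exact_mod_cast hi1
    positivity
  -- final comparison
  have hfinal : c / (ν * π ^ 2) * ((1 + s)⁻¹ - (s * ((N:ℝ)+1))⁻¹)
      ≤ (1 / s) * ((c / (ν * π ^ 2)) * ((1:ℝ)/k₀ - 1/((N:ℝ)+1))) := by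
    have hre : (1 / s) * ((c / (ν * π ^ 2)) * ((1:ℝ)/k₀ - 1/((N:ℝ)+1)))
        = c / (ν * π ^ 2) * ((s * (k₀:ℝ))⁻¹ - (s * ((N:ℝ)+1))⁻¹) := by
      have hk₀ne : ((k₀:ℝ)) ≠ 0 := by positivity
      field_simp
    rw [hre]
    apply mul_le_mul_of_nonneg_left _ (by positivity)
    have : (1 + s)⁻¹ ≤ (s * (k₀:ℝ))⁻¹ := inv_anti₀ hsk₀pos hsk₀
    linarith
  calc (∫ x in (0:ℝ)..M,
        c / (2 * ν * π ^ 2 * (x + (1 + Real.sqrt T) ^ 2) ^ ((3:ℝ)/2)))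
      ≤ c / (ν * π ^ 2) * ((1 + s)⁻¹ - (s * ((N:ℝ)+1))⁻¹) := by rw [← hval]; exact hmono
    _ ≤ (1 / s) * ((c / (ν * π ^ 2)) * ((1:ℝ)/k₀ - 1/((N:ℝ)+1))) := hfinal
    _ ≤ (1 / s) * ∑ k ∈ Finset.Icc k₀ N,
          (1 - Real.exp (-(ν * π ^ 2 * (k:ℝ) ^ 2 * t))) ^ 2 / (ν * π ^ 2 * (k:ℝ) ^ 2) := by
        apply mul_le_mul_of_nonneg_left hsum1 (by positivity)
    _ ≤ (1 / s) * ∑ k ∈ Finset.Icc 1 N,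
          (1 - Real.exp (-(ν * π ^ 2 * (k:ℝ) ^ 2 * t))) ^ 2 / (ν * π ^ 2 * (k:ℝ) ^ 2) := by
        apply mul_le_mul_of_nonneg_left hsum2 (by positivity)
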